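/- The bottom-right entry of the Bezout matrix of P and Q satisfies b_{nn} = p_n²·Σ_{i=1}^n Q(x_i)/P'(x_i), when P has simple roots x_1, …, x_n. -/

import Mathlib

open Polynomial

/-- The quotient polynomial `(P(x)Q(y) - P(y)Q(x))/(x - y)` in `R[y][x]`. -/
noncomputable def bezPoly {R : Type*} [CommRing R] (P Q : R[X]) :
    Polynomial (Polynomial R) :=
  (P.map C * C Q - C P * Q.map C) /ₘ (X - C X)

/-- The `n × n` Bezout matrix: `bezMat n P Q i j` is the coefficient of
`x^i y^j` in `(P(x)Q(y) - P(y)Q(x))/(x - y)` (`0`-based indexing, so it is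
the entry `b_{i+1, j+1}` of the paper). -/
noncomputable def bezMat {R : Type*} [CommRing R] (n : ℕ) (P Q : R[X]) :
    Matrix (Fin n) (Fin n) R :=
  fun i j => ((bezPoly P Q).coeff i).coeff j

lemma coeff_basis_top {n : ℕ} (x : Fin n → ℝ) (hx : Function.Injective x) (i : Fin n) :
    (Lagrange.basis Finset.univ x i).coeff (n - 1) = Lagrange.nodalWeight Finset.univ x i := by
  have hvs : Set.InjOn x (Finset.univ : Finset (Fin n)) := hx.injOn
  have hdeg := Lagrange.natDegree_basis hvs (Finset.mem_univ i)
  rw [Finset.card_univ, Fintype.card_fin] at hdeg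
  have h1 : (Lagrange.basis Finset.univ x i).coeff (n - 1)
      = (Lagrange.basis Finset.univ x i).leadingCoeff := by
    rw [Polynomial.leadingCoeff, hdeg]
  rw [h1, Lagrange.basis, Polynomial.leadingCoeff_prod, Lagrange.nodalWeight]
  refine Finset.prod_congr rfl fun j hj => ?_
  rw [Lagrange.basisDivisor, leadingCoeff_mul, leadingCoeff_C, leadingCoeff_X_sub_C, mul_one]

lemma coeff_eq_sum_weight {n : ℕ} (x : Fin n → ℝ) (hx : Function.Injective x)
    (f : ℝ[X]) (hf : f.degree < (n : WithBot ℕ)) :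
    f.coeff (n - 1) = ∑ i, f.eval (x i) * Lagrange.nodalWeight Finset.univ x i := by
  have hvs : Set.InjOn x (Finset.univ : Finset (Fin n)) := hx.injOn
  have hcard : (Finset.univ : Finset (Fin n)).card = n := by simp
  have h := Lagrange.eq_interpolate hvs (by rwa [hcard])
  conv_lhs => rw [h]
  rw [Lagrange.interpolate_apply, finset_sum_coeff]
  refine Finset.sum_congr rfl fun i _ => ?_
  rw [coeff_C_mul, coeff_basis_top x hx i]

/-- For `P(x) = p_n (x-x_1)⋯(x-x_n)` with distinct roots,
`b_{nn} = p_n² Σ_i Q(x_i)/P'(x_i)`. -/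
theorem bezMat_corner_eq_sum (n : ℕ) (hn : 0 < n) (p : ℝ) (hp : p ≠ 0)
    (x : Fin n → ℝ) (hx : Function.Injective x)
    (P Q : ℝ[X]) (hP : P = C p * ∏ i, (X - C (x i))) (hQ : Q.degree ≤ n) :
    bezMat n P Q ⟨n - 1, by omega⟩ ⟨n - 1, by omega⟩ =
      p ^ 2 * ∑ i, Q.eval (x i) / (Polynomial.derivative P).eval (x i) := by
  obtain ⟨m, rfl⟩ : ∃ m, n = m + 1 := ⟨n - 1, (Nat.succ_pred_eq_of_pos hn).symm⟩
  set N : ℝ[X] := ∏ i, (X - C (x i)) with hN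
  have hNnodal : N = Lagrange.nodal Finset.univ x := rfl
  have hNm : N.Monic := monic_prod_of_monic _ _ fun i _ => monic_X_sub_C _
  have hNdeg : N.natDegree = m + 1 := by
    have := Lagrange.natDegree_nodal (s := (Finset.univ : Finset (Fin (m+1)))) (v := x)
    rw [hNnodal, this]; simp
  have hNtop : N.coeff (m + 1) = 1 := by
    have := hNm.coeff_natDegree
    rwa [hNdeg] at this
  have hPdeg : P.degree = ((m + 1 : ℕ) : WithBot ℕ) := by
    rw [hP, degree_mul, degree_C hp, zero_add, degree_eq_natDegree hNm.ne_zero, hNdeg]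
  -- Part 1: the Bezout identity F = (X - C X) * B
  set F : Polynomial (Polynomial ℝ) := P.map C * C Q - C P * Q.map C with hF
  set B : Polynomial (Polynomial ℝ) := bezPoly P Q with hB
  have hFB : F = (X - C X) * B := by
    have hmod := modByMonic_add_div F (X - C X)
    have hev : F.eval (X : ℝ[X]) = 0 := by
      simp [hF, eval_map, eval₂_C_X, mul_comm]
    rw [modByMonic_X_sub_C_eq_C_eval, hev, C_0, zero_add] at hmod
    exact hmod.symm
  have hdegF : F.degree ≤ ((m + 1 : ℕ) : WithBot ℕ) := by
    refine (degree_sub_le _ _).trans (max_le ?_ ?_)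
    · refine (degree_mul_le _ _).trans ?_
      calc (P.map C).degree + (C Q).degree ≤ ((m+1 : ℕ) : WithBot ℕ) + 0 :=
            add_le_add (degree_map_le.trans hPdeg.le) degree_C_le
        _ = ((m+1 : ℕ) : WithBot ℕ) := add_zero _
    · refine (degree_mul_le _ _).trans ?_
      calc (C P).degree + (Q.map C).degree ≤ 0 + ((m+1 : ℕ) : WithBot ℕ) :=
            add_le_add degree_C_le (degree_map_le.trans hQ)
        _ = ((m+1 : ℕ) : WithBot ℕ) := zero_add _
  have hBn : B.coeff (m + 1) = 0 := by
    by_cases hB0 : B = 0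
    · simp [hB0]
    · apply coeff_eq_zero_of_degree_lt
      have hd : F.degree = 1 + B.degree := by
        rw [hFB, degree_mul, degree_X_sub_C]
      rw [hd] at hdegF
      rw [degree_eq_natDegree hB0] at hdegF ⊢
      have h1 : ((B.natDegree + 1 : ℕ) : WithBot ℕ) ≤ ((m+1 : ℕ) : WithBot ℕ) := by
        rw [Nat.cast_add, Nat.cast_one, add_comm]
        exact hdegF
      have h2 : B.natDegree + 1 ≤ m + 1 := by exact_mod_cast h1
      exact_mod_cast Nat.lt_of_lt_of_le (Nat.lt_succ_self _) (by exact_mod_cast h1)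
  have hBcoeff : B.coeff m = C (P.coeff (m+1)) * Q - P * C (Q.coeff (m+1)) := by
    have h2 := congrArg (fun f : Polynomial (Polynomial ℝ) => f.coeff (m+1)) hFB
    simp only [hF, sub_mul, coeff_sub, coeff_mul_C, coeff_C_mul, coeff_map,
      coeff_X_mul, hBn, mul_zero, sub_zero] at h2
    rw [← h2]
  -- the corner entry
  have hcorner : bezMat (m+1) P Q ⟨m + 1 - 1, by omega⟩ ⟨m + 1 - 1, by omega⟩
      = p * Q.coeff m - p * N.coeff m * Q.coeff (m+1) := by
    have hPm1 : P.coeff (m+1) = p := by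
      rw [hP, coeff_C_mul, hNtop, mul_one]
    have hPm : P.coeff m = p * N.coeff m := by
      rw [hP, coeff_C_mul]
    show ((bezPoly P Q).coeff ((m + 1 - 1 : ℕ))).coeff ((m + 1 - 1 : ℕ))
      = p * Q.coeff m - p * N.coeff m * Q.coeff (m+1)
    simp only [Nat.add_sub_cancel]
    rw [← hB, hBcoeff, coeff_sub, coeff_C_mul, coeff_mul_C, hPm1, hPm]
  -- Part 2: the RHS
  set R : ℝ[X] := Q - C (Q.coeff (m+1)) * N with hR
  have hRdeg : R.degree < ((m+1 : ℕ) : WithBot ℕ) := by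
    rw [degree_lt_iff_coeff_zero]
    intro k hk
    have hk' : (m + 1 : ℕ) ≤ k := by exact_mod_cast hk
    rcases eq_or_lt_of_le hk' with h | h
    · rw [hR, coeff_sub, coeff_C_mul, ← h, hNtop, mul_one, sub_self]
    · have hQk : Q.coeff k = 0 := coeff_eq_zero_of_degree_lt (lt_of_le_of_lt hQ (by exact_mod_cast h))
      have hNk : N.coeff k = 0 := coeff_eq_zero_of_natDegree_lt (by omega)
      rw [hR, coeff_sub, coeff_C_mul, hQk, hNk, mul_zero, sub_zero]
  have hReval : ∀ i, R.eval (x i) = Q.eval (x i) := by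
    intro i
    have : N.eval (x i) = 0 := by
      rw [hNnodal]
      exact Lagrange.eval_nodal_at_node (Finset.mem_univ i)
    simp [hR, this]
  have hKey := coeff_eq_sum_weight x hx R hRdeg
  simp only [Nat.add_sub_cancel, hReval] at hKey
  have hRcoeff : R.coeff m = Q.coeff m - Q.coeff (m+1) * N.coeff m := by
    rw [hR, coeff_sub, coeff_C_mul]
  -- rewrite the RHS sum
  have hDer : ∀ i : Fin (m+1), (Polynomial.derivative P).eval (x i)
      = p * (Lagrange.nodalWeight Finset.univ x i)⁻¹ := by
    intro i
    rw [hP, derivative_C_mul, eval_mul, eval_C, hNnodal,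
      Lagrange.eval_nodal_derivative_eval_node_eq (Finset.mem_univ i),
      Lagrange.nodalWeight_eq_eval_nodal_erase_inv, inv_inv]
  have hwne : ∀ i : Fin (m+1), Lagrange.nodalWeight Finset.univ x i ≠ 0 := fun i =>
    Lagrange.nodalWeight_ne_zero hx.injOn (Finset.mem_univ i)
  have hRHS : p ^ 2 * ∑ i, Q.eval (x i) / (Polynomial.derivative P).eval (x i)
      = p * ∑ i, Q.eval (x i) * Lagrange.nodalWeight Finset.univ x i := by
    rw [Finset.mul_sum, Finset.mul_sum]
    refine Finset.sum_congr rfl fun i _ => ?_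
    rw [hDer i]
    field_simp
  rw [hcorner, hRHS, ← hKey, hRcoeff]
  ring
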